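/- Let f(U) = ⟨φ_0|U†HU|φ_0⟩ on the unitary group U(D) with H Hermitian having eigenvalues E_0 = ⋯ = E_{s−1} < E_s ≤ ⋯ ≤ E_{D−1} and gap Δ = E_s − E_0. If f(U) − E_0 ≤ Δ/2, then the Riemannian gradient satisfies ‖grad f(U)‖_F² ≥ (Δ²/(16‖H‖))·(f(U) − E_0), where ‖H‖ is the operator norm. -/

import Mathlib

open Matrix BigOperators
open scoped Matrix.Norms.L2Operator

noncomputable section

/-- Hermitian part `sym(A) = (A + A†)/2`. -/
def msym {D : ℕ} (A : Matrix (Fin D) (Fin D) ℂ) : Matrix (Fin D) (Fin D) ℂ :=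
  (1 / 2 : ℂ) • (A + Aᴴ)

/-- Riemannian gradient `grad f(U) = H U ρ₀ − U sym(U† H U ρ₀)`. -/
def rgrad {D : ℕ} (H U ρ : Matrix (Fin D) (Fin D) ℂ) : Matrix (Fin D) (Fin D) ℂ :=
  H * U * ρ - U * msym (Uᴴ * H * U * ρ)

/-- Squared Frobenius norm. -/
def frobSq {D : ℕ} (A : Matrix (Fin D) (Fin D) ℂ) : ℝ :=
  ∑ i, ∑ j, Complex.normSq (A i j)

section helpers
variable {D : ℕ}

lemma mul_vecMulVec' (M : Matrix (Fin D) (Fin D) ℂ) (x y : Fin D → ℂ) :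
    M * vecMulVec x y = vecMulVec (M *ᵥ x) y := by
  ext i j
  simp [Matrix.mul_apply, vecMulVec_apply, Matrix.mulVec, dotProduct, Finset.sum_mul, mul_assoc]

lemma vecMulVec_conjT (x y : Fin D → ℂ) :
    (vecMulVec x y)ᴴ = vecMulVec (star y) (star x) := by
  ext i j
  simp [vecMulVec_apply, conjTranspose_apply, mul_comm]

lemma vecMulVec_mulVec' (x y v : Fin D → ℂ) :
    (vecMulVec x y) *ᵥ v = (y ⬝ᵥ v) • x := by
  ext i
  simp [vecMulVec_apply, Matrix.mulVec, dotProduct, Finset.mul_sum, mul_assoc, mul_comm,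
    mul_left_comm]

lemma sum_mulVec' (M : Fin D → Matrix (Fin D) (Fin D) ℂ) (v : Fin D → ℂ) :
    (∑ k, M k) *ᵥ v = ∑ k, (M k) *ᵥ v := by
  ext i
  simp [Matrix.mulVec, dotProduct, Matrix.sum_apply, Finset.sum_mul]
  rw [Finset.sum_comm]

lemma dotProduct_sum' (v : Fin D → ℂ) (w : Fin D → (Fin D → ℂ)) :
    v ⬝ᵥ (∑ k, w k) = ∑ k, v ⬝ᵥ w k := by
  simp [dotProduct, Finset.mul_sum]
  rw [Finset.sum_comm]

lemma sum_dotProduct' (v : Fin D → (Fin D → ℂ)) (w : Fin D → ℂ) :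
    (∑ k, v k) ⬝ᵥ w = ∑ k, v k ⬝ᵥ w := by
  simp [dotProduct, Finset.sum_mul]
  rw [Finset.sum_comm]

lemma dot_self_eq (x : Fin D → ℂ) :
    star x ⬝ᵥ x = ((∑ i, Complex.normSq (x i) : ℝ) : ℂ) := by
  push_cast
  simp [dotProduct, Complex.normSq_eq_conj_mul_self]

lemma frobSq_half_sub (x y z t : Fin D → ℂ) :
    frobSq ((1/2 : ℂ) • (vecMulVec x y - vecMulVec z t)) =
    (1/4) * ((∑ i, Complex.normSq (x i)) * (∑ j, Complex.normSq (y j))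
      + (∑ i, Complex.normSq (z i)) * (∑ j, Complex.normSq (t j))
      - 2 * ((star z ⬝ᵥ x) * (star t ⬝ᵥ y)).re) := by
  have h1 : ∀ i j : Fin D,
      Complex.normSq (((1/2 : ℂ) • (vecMulVec x y - vecMulVec z t)) i j)
      = (1/4) * (Complex.normSq (x i) * Complex.normSq (y j)
          + Complex.normSq (z i) * Complex.normSq (t j)
          - 2 * ((x i * y j) * (starRingEnd ℂ) (z i * t j)).re) := by
    intro i j
    simp only [Matrix.smul_apply, Matrix.sub_apply, vecMulVec_apply, smul_eq_mul]
    rw [Complex.normSq_mul, Complex.normSq_sub]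
    have h12 : Complex.normSq (1/2 : ℂ) = 1/4 := by
      norm_num [Complex.normSq_apply]
    rw [h12, Complex.normSq_mul, Complex.normSq_mul]
  have h4 : ∑ i, ∑ j, ((x i * y j) * (starRingEnd ℂ) (z i * t j)).re
      = ((star z ⬝ᵥ x) * (star t ⬝ᵥ y)).re := by
    have hC : (∑ i, ∑ j, (x i * y j * (starRingEnd ℂ) (z i * t j)))
        = (star z ⬝ᵥ x) * (star t ⬝ᵥ y) := by
      rw [dotProduct, dotProduct, Finset.sum_mul_sum]
      refine Finset.sum_congr rfl fun i _ => Finset.sum_congr rfl fun j _ => ?_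
      simp only [Pi.star_apply, Complex.star_def, _root_.map_mul]
      ring
    rw [← hC]
    simp [Complex.re_sum]
  simp only [frobSq, h1]
  simp only [← Finset.mul_sum]
  congr 1
  simp only [Finset.sum_sub_distrib, Finset.sum_add_distrib, ← Finset.mul_sum]
  rw [Finset.sum_mul_sum, Finset.sum_mul_sum, h4]
  rw [← Finset.sum_mul_sum, ← Finset.sum_mul_sum]
  simp only [Finset.sum_mul]

lemma abs_eig_le_opNorm (H : Matrix (Fin D) (Fin D) ℂ) (x : Fin D → ℂ) (e : ℝ)
    (hx : ∑ i, Complex.normSq (x i) = 1)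
    (hev : H *ᵥ x = (e : ℂ) • x) : |e| ≤ ‖H‖ := by
  have key := H.l2_opNorm_mulVec ((EuclideanSpace.equiv (Fin D) ℂ).symm x)
  have hsq : ∀ y : Fin D → ℂ, ∀ i, ‖((EuclideanSpace.equiv (Fin D) ℂ).symm y) i‖ ^ 2
      = Complex.normSq (y i) := by
    intro y i
    simp [EuclideanSpace.equiv, Complex.sq_norm]
  have hxnorm : ‖(EuclideanSpace.equiv (Fin D) ℂ).symm x‖ = 1 := by
    rw [EuclideanSpace.norm_eq]
    simp only [hsq, hx, Real.sqrt_one]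
  have hmv : (EuclideanSpace.equiv (Fin D) ℂ).symm (H *ᵥ x)
      = (EuclideanSpace.equiv (Fin D) ℂ).symm ((e : ℂ) • x) := by rw [hev]
  have hlhs : ‖(EuclideanSpace.equiv (Fin D) ℂ).symm (H *ᵥ x)‖ = |e| := by
    rw [hmv, EuclideanSpace.norm_eq]
    have : ∀ i, ‖((EuclideanSpace.equiv (Fin D) ℂ).symm ((e : ℂ) • x)) i‖ ^ 2
        = e ^ 2 * Complex.normSq (x i) := by
      intro i
      rw [hsq]
      simp [Complex.normSq_mul, Complex.normSq_ofReal, sq]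
    simp only [this]
    rw [← Finset.mul_sum, hx, mul_one, Real.sqrt_sq_eq_abs]
  have key2 : ‖(EuclideanSpace.equiv (Fin D) ℂ).symm (H *ᵥ x)‖ ≤ ‖H‖ * 1 := by
    rw [← hxnorm]
    exact key
  rw [hlhs, mul_one] at key2
  exact key2

end helpers

lemma key_ineq (D s : ℕ) (hs : s < D) (E : Fin D → ℝ) (p : Fin D → ℝ)
    (hp0 : ∀ k, 0 ≤ p k) (hp1 : ∑ k, p k = 1)
    (hmono : ∀ j k : Fin D, j ≤ k → E j ≤ E k)
    (E0 Δ N : ℝ) (hΔpos : 0 < Δ) (hN : 0 < N)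
    (hdeg : ∀ k : Fin D, (k : ℕ) < s → E k = E0)
    (hEs : E ⟨s, hs⟩ = E0 + Δ)
    (hEbound : ∀ k, |E k| ≤ N)
    (hinit : (∑ k, E k * p k) - E0 ≤ Δ / 2) :
    Δ ^ 2 / (16 * N) * ((∑ k, E k * p k) - E0)
      ≤ ((∑ k, E k ^ 2 * p k) - (∑ k, E k * p k) ^ 2) / 2 := by
  set f : ℝ := ∑ k, E k * p k with hf
  set g : ℝ := ∑ k, E k ^ 2 * p k with hg
  set t : ℝ := f - E0 with htdef
  have hge : ∀ k : Fin D, s ≤ (k : ℕ) → E0 + Δ ≤ E k := by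
    intro k hk
    rw [← hEs]
    exact hmono _ _ (by simpa [Fin.le_def] using hk)
  have hE0le : ∀ k : Fin D, E0 ≤ E k := by
    intro k
    rcases lt_or_ge (k : ℕ) s with h | h
    · exact le_of_eq (hdeg k h).symm
    · linarith [hge k h]
  have ht : t = ∑ k, p k * (E k - E0) := by
    simp only [mul_sub, Finset.sum_sub_distrib, ← Finset.sum_mul, hp1]
    simp [htdef, hf, mul_comm]
  have ht0 : 0 ≤ t := by
    rw [ht]
    exact Finset.sum_nonneg fun k _ => mul_nonneg (hp0 k) (by linarith [hE0le k])
  rcases Nat.eq_zero_or_pos s with rfl | hspos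
  · exfalso
    have hΔt : Δ ≤ t := by
      have e1 : Δ = ∑ k : Fin D, p k * Δ := by
        rw [← Finset.sum_mul, hp1, one_mul]
      rw [ht, e1]
      exact Finset.sum_le_sum fun k _ =>
        mul_le_mul_of_nonneg_left (by linarith [hge k (Nat.zero_le _)]) (hp0 k)
    linarith
  have hE0N : |E0| ≤ N := by
    have h0s : ((⟨0, lt_of_le_of_lt (Nat.zero_le s) hs⟩ : Fin D) : ℕ) < s := hspos
    rw [← hdeg _ h0s]
    exact hEbound _
  have hE0N' := abs_le.mp hE0N
  set S : Finset (Fin D) := Finset.univ.filter (fun k : Fin D => s ≤ (k : ℕ)) with hS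
  set P : ℝ := ∑ k ∈ S, p k with hP
  have hP0 : 0 ≤ P := Finset.sum_nonneg fun k _ => hp0 k
  have htS : t = ∑ k ∈ S, p k * (E k - E0) := by
    rw [ht]
    rw [← Finset.sum_filter_add_sum_filter_not Finset.univ (fun k : Fin D => s ≤ (k : ℕ))]
    have : ∑ k ∈ Finset.univ.filter (fun k : Fin D => ¬ s ≤ (k : ℕ)), p k * (E k - E0) = 0 := by
      apply Finset.sum_eq_zero
      intro k hk
      simp only [Finset.mem_filter, not_le] at hk
      rw [hdeg k hk.2]
      ring
    rw [this, add_zero]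
  have h1 : t ≤ 2 * N * P := by
    rw [htS, hP, Finset.mul_sum]
    apply Finset.sum_le_sum
    intro k hk
    rw [mul_comm (2*N) (p k)]
    apply mul_le_mul_of_nonneg_left _ (hp0 k)
    have := abs_le.mp (hEbound k)
    linarith [hE0N'.1]
  have hvar : ∑ k, p k * (E k - f) ^ 2 = g - f ^ 2 := by
    have : ∀ k : Fin D, p k * (E k - f) ^ 2
        = E k ^ 2 * p k - 2 * f * (E k * p k) + f ^ 2 * p k := by intro k; ring
    simp only [this, Finset.sum_add_distrib, Finset.sum_sub_distrib, ← Finset.mul_sum, hp1,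
      ← hf, ← hg]
    ring
  have h2 : (Δ / 2) ^ 2 * P ≤ g - f ^ 2 := by
    rw [← hvar, hP, Finset.mul_sum]
    have hsub : ∑ k ∈ S, (Δ/2)^2 * p k ≤ ∑ k ∈ S, p k * (E k - f) ^ 2 := by
      apply Finset.sum_le_sum
      intro k hk
      simp only [hS, Finset.mem_filter] at hk
      have hEk := hge k hk.2
      have hEkf : Δ / 2 ≤ E k - f := by
        have : f = E0 + t := by rw [htdef]; ring
        rw [this]
        linarith [hinit]
      rw [mul_comm ((Δ/2)^2) (p k)]
      apply mul_le_mul_of_nonneg_left _ (hp0 k)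
      have h0 : 0 ≤ Δ / 2 := by linarith
      nlinarith
    refine le_trans hsub ?_
    apply Finset.sum_le_sum_of_subset_of_nonneg (Finset.subset_univ S)
    intro k _ _
    exact mul_nonneg (hp0 k) (sq_nonneg _)
  rw [div_mul_eq_mul_div, div_le_div_iff₀ (by linarith) (by norm_num)]
  nlinarith [mul_le_mul_of_nonneg_left h1 (sq_nonneg Δ), hP0, sq_nonneg Δ,
    mul_nonneg hP0 (le_of_lt hN)]

/-- gradient-dominance bound
`‖grad f(U)‖_F² ≥ (Δ²/(16‖H‖))·(f(U) − E₀)` when `f(U) − E₀ ≤ Δ/2`. -/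
theorem grad_dominance (D : ℕ) (s : ℕ) (hs : s < D)
    (H : Matrix (Fin D) (Fin D) ℂ)
    (E : Fin D → ℝ) (ψ : Fin D → (Fin D → ℂ))
    (hortho : ∀ j k : Fin D, star (ψ j) ⬝ᵥ ψ k = if j = k then 1 else 0)
    (hH : H = ∑ k, (E k : ℂ) • vecMulVec (ψ k) (star (ψ k)))
    (hmono : ∀ j k : Fin D, j ≤ k → E j ≤ E k)
    (E0 : ℝ) (hdeg : ∀ k : Fin D, (k : ℕ) < s → E k = E0)
    (Δ : ℝ) (hΔ : Δ = E ⟨s, hs⟩ - E0) (hΔpos : 0 < Δ)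
    (φ0 : Fin D → ℂ) (hφ0 : star φ0 ⬝ᵥ φ0 = 1)
    (U : Matrix (Fin D) (Fin D) ℂ) (hU : U ∈ Matrix.unitaryGroup (Fin D) ℂ)
    (hHnorm : 0 < ‖H‖)
    (hinit : (star (U.mulVec φ0) ⬝ᵥ H.mulVec (U.mulVec φ0)).re - E0 ≤ Δ / 2) :
    Δ ^ 2 / (16 * ‖H‖) * ((star (U.mulVec φ0) ⬝ᵥ H.mulVec (U.mulVec φ0)).re - E0)
      ≤ frobSq (rgrad H U (vecMulVec φ0 (star φ0))) := by
  have hU1 : Uᴴ * U = 1 := by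
    have := Matrix.mem_unitaryGroup_iff'.mp hU
    simpa [Matrix.star_eq_conjTranspose] using this
  have hU2 : U * Uᴴ = 1 := by
    have := Matrix.mem_unitaryGroup_iff.mp hU
    simpa [Matrix.star_eq_conjTranspose] using this
  set w : Fin D → ℂ := U *ᵥ φ0 with hwdef
  set u : Fin D → ℂ := H *ᵥ w with hudef
  set a : Fin D → ℂ := Uᴴ *ᵥ u with hadef
  set c : Fin D → ℂ := fun k => star (ψ k) ⬝ᵥ w with hcdef
  set p : Fin D → ℝ := fun k => Complex.normSq (c k) with hpdef
  have hw1 : star w ⬝ᵥ w = 1 := by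
    rw [hwdef, Matrix.star_mulVec, Matrix.dotProduct_mulVec, Matrix.vecMul_vecMul, hU1,
      Matrix.vecMul_one, hφ0]
  have haa : star a ⬝ᵥ a = star u ⬝ᵥ u := by
    rw [hadef, Matrix.star_mulVec, Matrix.conjTranspose_conjTranspose,
      Matrix.dotProduct_mulVec, Matrix.vecMul_vecMul, hU2, Matrix.vecMul_one]
  have hUa : U *ᵥ a = u := by
    rw [hadef, Matrix.mulVec_mulVec, hU2, Matrix.one_mulVec]
  -- gradient formula
  have hrg : rgrad H U (vecMulVec φ0 (star φ0))
      = (1/2 : ℂ) • (vecMulVec u (star φ0) - vecMulVec w (star a)) := by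
    have e1 : U * vecMulVec φ0 (star φ0) = vecMulVec w (star φ0) := mul_vecMulVec' U φ0 _
    have e2 : H * U * vecMulVec φ0 (star φ0) = vecMulVec u (star φ0) := by
      rw [mul_assoc, e1, mul_vecMulVec']
    have e3 : Uᴴ * H * U * vecMulVec φ0 (star φ0) = vecMulVec a (star φ0) := by
      rw [mul_assoc, mul_assoc, ← mul_assoc H U, e2, mul_vecMulVec']
    rw [rgrad, msym, e2, e3, vecMulVec_conjT, star_star]
    rw [Matrix.mul_smul, mul_add, mul_vecMulVec', mul_vecMulVec', hUa, ← hwdef]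
    module
  -- spectral expansion of H *ᵥ w
  have hHw : H *ᵥ w = ∑ k, ((E k : ℂ) * c k) • ψ k := by
    rw [hH, sum_mulVec']
    refine Finset.sum_congr rfl fun k _ => ?_
    rw [smul_mulVec, vecMulVec_mulVec', smul_smul]
  have hcconj : ∀ k, star w ⬝ᵥ ψ k = (starRingEnd ℂ) (c k) := by
    intro k
    rw [star_dotProduct]
    rfl
  -- energy
  have hF : star w ⬝ᵥ (H *ᵥ w) = ((∑ k, E k * p k : ℝ) : ℂ) := by
    rw [hHw, dotProduct_sum']
    push_cast
    refine Finset.sum_congr rfl fun k _ => ?_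
    rw [dotProduct_smul, hcconj k, smul_eq_mul, mul_assoc]
    have hc : c k * (starRingEnd ℂ) (c k) = ((p k : ℝ) : ℂ) := by
      rw [Complex.mul_conj]
    rw [hc]
  -- second moment
  have hG : star (H *ᵥ w) ⬝ᵥ (H *ᵥ w) = ((∑ k, E k ^ 2 * p k : ℝ) : ℂ) := by
    rw [hHw]
    have hstar : star (∑ k, ((E k : ℂ) * c k) • ψ k)
        = ∑ k, ((starRingEnd ℂ) ((E k : ℂ) * c k)) • star (ψ k) := by
      ext i
      simp [Finset.sum_apply, Pi.star_apply, Pi.smul_apply, smul_eq_mul, map_sum,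
        _root_.map_mul, Complex.star_def]
    rw [hstar, sum_dotProduct']
    have hterm : ∀ k : Fin D, (((starRingEnd ℂ) ((E k : ℂ) * c k)) • star (ψ k))
        ⬝ᵥ (∑ l, ((E l : ℂ) * c l) • ψ l) = ((E k ^ 2 * p k : ℝ) : ℂ) := by
      intro k
      rw [smul_dotProduct, dotProduct_sum']
      simp only [dotProduct_smul, hortho, smul_eq_mul, mul_ite, mul_one, mul_zero,
        Finset.sum_ite_eq, Finset.mem_univ, if_true]
      rw [_root_.map_mul, Complex.conj_ofReal]
      have hc : (starRingEnd ℂ) (c k) * c k = ((p k : ℝ) : ℂ) := by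
        rw [mul_comm, Complex.mul_conj]
      push_cast
      linear_combination ((E k : ℂ)) ^ 2 * hc
    rw [Finset.sum_congr rfl fun k _ => hterm k]
    norm_cast
  -- completeness and ∑ p = 1
  have hp1 : ∑ k, p k = 1 := by
    set W : Matrix (Fin D) (Fin D) ℂ := Matrix.of fun i k => ψ k i with hW
    have hWc : Wᴴ * W = 1 := by
      ext j k
      rw [Matrix.mul_apply, Matrix.one_apply]
      simpa [hW, Matrix.conjTranspose_apply, dotProduct] using hortho j k
    have hWc' : W * Wᴴ = 1 := mul_eq_one_comm.mp hWc
    have hcomp : (∑ k, vecMulVec (ψ k) (star (ψ k))) = (1 : Matrix (Fin D) (Fin D) ℂ) := by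
      rw [← hWc']
      ext i j
      simp [Matrix.sum_apply, vecMulVec_apply, Matrix.mul_apply, Matrix.conjTranspose_apply,
        hW, Complex.star_def]
    have hkey : ((∑ k, p k : ℝ) : ℂ) = star w ⬝ᵥ ((∑ k, vecMulVec (ψ k) (star (ψ k))) *ᵥ w) := by
      rw [sum_mulVec', dotProduct_sum']
      push_cast
      refine Finset.sum_congr rfl fun k _ => ?_
      rw [vecMulVec_mulVec', dotProduct_smul, hcconj k, smul_eq_mul]
      simp only [hpdef]
      exact (Complex.mul_conj (c k)).symm
    rw [hcomp, Matrix.one_mulVec, hw1] at hkey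
    exact_mod_cast hkey
  have hp0 : ∀ k, 0 ≤ p k := fun k => Complex.normSq_nonneg _
  -- eigenvalue bound
  have hEbound : ∀ k, |E k| ≤ ‖H‖ := by
    intro k
    have hψn : ∑ i, Complex.normSq (ψ k i) = 1 := by
      have := hortho k k
      rw [dot_self_eq (ψ k)] at this
      simp only [if_true] at this
      exact_mod_cast this
    have hev : H *ᵥ ψ k = ((E k : ℝ) : ℂ) • ψ k := by
      rw [hH, sum_mulVec']
      have : ∀ l : Fin D, ((E l : ℂ) • vecMulVec (ψ l) (star (ψ l))) *ᵥ ψ k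
          = (if l = k then ((E l : ℂ)) else 0) • ψ l := by
        intro l
        rw [smul_mulVec, vecMulVec_mulVec', hortho l k, smul_smul]
        split <;> simp
      rw [Finset.sum_congr rfl fun l _ => this l]
      rw [Finset.sum_eq_single k]
      · simp
      · intro l _ hl
        simp [hl]
      · simp
    exact abs_eig_le_opNorm H (ψ k) (E k) hψn hev
  -- real quantities
  set f : ℝ := ∑ k, E k * p k with hfd
  set g : ℝ := ∑ k, E k ^ 2 * p k with hgd
  have hfre : (star w ⬝ᵥ (H *ᵥ w)).re = f := by rw [hF]; exact Complex.ofReal_re _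
  -- frobSq value
  have hfrob : frobSq (rgrad H U (vecMulVec φ0 (star φ0))) = (g - f ^ 2) / 2 := by
    rw [hrg, frobSq_half_sub]
    have hn_u : (∑ i, Complex.normSq (u i)) = g := by
      have := hG
      rw [dot_self_eq] at this
      exact_mod_cast this
    have hn_phi : (∑ j, Complex.normSq ((star φ0) j)) = 1 := by
      have := hφ0
      rw [dot_self_eq] at this
      have h2 : (∑ i, Complex.normSq (φ0 i)) = 1 := by exact_mod_cast this
      simpa [Pi.star_apply, Complex.normSq_conj] using h2
    have hn_w : (∑ i, Complex.normSq (w i)) = 1 := by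
      have := hw1
      rw [dot_self_eq] at this
      exact_mod_cast this
    have hn_a : (∑ j, Complex.normSq ((star a) j)) = g := by
      have := haa
      rw [dot_self_eq, dot_self_eq] at this
      have h2 : (∑ i, Complex.normSq (a i)) = ∑ i, Complex.normSq (u i) := by exact_mod_cast this
      rw [hn_u] at h2
      simpa [Pi.star_apply, Complex.normSq_conj] using h2
    have hcross1 : star w ⬝ᵥ u = ((f : ℝ) : ℂ) := hF
    have hcross2 : star (star a) ⬝ᵥ star φ0 = ((f : ℝ) : ℂ) := by
      rw [star_star]
      have e1 : a ⬝ᵥ star φ0 = star φ0 ⬝ᵥ a := dotProduct_comm _ _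
      rw [e1, hadef, Matrix.dotProduct_mulVec, ← Matrix.star_mulVec, ← hwdef]
      exact hF
    rw [hn_u, hn_phi, hn_w, hn_a, hcross1, hcross2]
    have : ((f : ℝ) : ℂ) * ((f : ℝ) : ℂ) = ((f ^ 2 : ℝ) : ℂ) := by push_cast; ring
    rw [this, Complex.ofReal_re]
    ring
  have hfre' : (star w ⬝ᵥ u).re = f := hfre
  rw [hfre', hfrob]
  have hEs : E ⟨s, hs⟩ = E0 + Δ := by rw [hΔ]; ring
  have hfinal : f - E0 ≤ Δ / 2 := by rw [← hfre']; exact hinit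
  exact key_ineq D s hs E p hp0 hp1 hmono E0 Δ ‖H‖ hΔpos hHnorm hdeg hEs hEbound hfinal
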